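/- For 0 < m < 1, the derivative identity 2m * d/dm K0(m) = E0(m)/(1-m) - K0(m) holds. -/

import Mathlib

open Real

/-- The complete elliptic integral of the first kind, as a function of the modulus `m`. -/
noncomputable def K0 (m : ℝ) : ℝ :=
  ∫ s in (0:ℝ)..(π/2), 1 / Real.sqrt (1 - m * Real.sin s ^ 2)

/-- The complete elliptic integral of the second kind, as a function of the modulus `m`. -/
noncomputable def E0 (m : ℝ) : ℝ :=
  ∫ s in (0:ℝ)..(π/2), Real.sqrt (1 - m * Real.sin s ^ 2)

-- positivity of 1 - x sin^2
lemma tpos (x : ℝ) (hx : x < 1) (s : ℝ) : 0 < 1 - x * Real.sin s ^ 2 := by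
  have h1 : Real.sin s ^ 2 ≤ 1 := Real.sin_sq_le_one s
  have h2 : (0:ℝ) ≤ Real.sin s ^ 2 := sq_nonneg _
  rcases le_or_gt x 0 with h | h
  · nlinarith
  · nlinarith

-- derivative in x of 1/sqrt(1 - x sin^2 s)
lemma dK (x : ℝ) (hx : x < 1) (s : ℝ) :
    HasDerivAt (fun x : ℝ => 1 / Real.sqrt (1 - x * Real.sin s ^ 2))
      (Real.sin s ^ 2 / (2 * (Real.sqrt (1 - x * Real.sin s ^ 2) * (1 - x * Real.sin s ^ 2)))) x := by
  have ht := tpos x hx s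
  set t := 1 - x * Real.sin s ^ 2 with htdef
  have hr : 0 < Real.sqrt t := Real.sqrt_pos.2 ht
  have hinner : HasDerivAt (fun x : ℝ => 1 - x * Real.sin s ^ 2) (-(Real.sin s ^ 2)) x := by
    simpa using ((hasDerivAt_id x).mul_const (Real.sin s ^ 2)).const_sub 1
  have hsq : HasDerivAt (fun x : ℝ => Real.sqrt (1 - x * Real.sin s ^ 2))
      (1 / (2 * Real.sqrt t) * (-(Real.sin s ^ 2))) x :=
    (Real.hasDerivAt_sqrt ht.ne').comp x hinner
  have h := hsq.inv hr.ne'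
  have : -(1 / (2 * Real.sqrt t) * -Real.sin s ^ 2) / Real.sqrt t ^ 2
      = Real.sin s ^ 2 / (2 * (Real.sqrt t * t)) := by
    rw [Real.sq_sqrt ht.le]
    field_simp
  rw [this] at h
  simpa [one_div, Pi.inv_def] using h

lemma dG (m : ℝ) (hm0 : 0 < m) (hm1 : m < 1) (s : ℝ) :
    HasDerivAt (fun s : ℝ => Real.sin s * Real.cos s / Real.sqrt (1 - m * Real.sin s ^ 2))
      ((Real.sqrt (1 - m * Real.sin s ^ 2)
        - (1 - m) / (Real.sqrt (1 - m * Real.sin s ^ 2) * (1 - m * Real.sin s ^ 2))) / m) s := by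
  have ht := tpos m hm1 s
  have hr : 0 < Real.sqrt (1 - m * Real.sin s ^ 2) := Real.sqrt_pos.2 ht
  have hsc : HasDerivAt (fun s : ℝ => Real.sin s * Real.cos s)
      (Real.cos s * Real.cos s + Real.sin s * (-Real.sin s)) s :=
    (Real.hasDerivAt_sin s).mul (Real.hasDerivAt_cos s)
  have hinner : HasDerivAt (fun s : ℝ => 1 - m * Real.sin s ^ 2)
      (-(m * (2 * Real.sin s * Real.cos s))) s := by
    have h1 : HasDerivAt (fun s : ℝ => Real.sin s ^ 2) (2 * Real.sin s * Real.cos s) s := by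
      simpa [mul_comm, mul_assoc, mul_left_comm] using (Real.hasDerivAt_sin s).fun_pow 2
    simpa using (h1.const_mul m).const_sub 1
  have hsq : HasDerivAt (fun s : ℝ => Real.sqrt (1 - m * Real.sin s ^ 2))
      (1 / (2 * Real.sqrt (1 - m * Real.sin s ^ 2)) * -(m * (2 * Real.sin s * Real.cos s))) s :=
    (Real.hasDerivAt_sqrt ht.ne').comp s hinner
  have h := hsc.fun_div hsq hr.ne'
  refine h.congr_deriv ?_
  symm
  have hss : Real.sqrt (1 - m * Real.sin s ^ 2) ^ 2 = 1 - m * Real.sin s ^ 2 :=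
    Real.sq_sqrt ht.le
  have hpy : Real.sin s ^ 2 + Real.cos s ^ 2 = 1 := Real.sin_sq_add_cos_sq s
  set r := Real.sqrt (1 - m * Real.sin s ^ 2)
  field_simp
  linear_combination ((r ^ 2 + (1 - m * Real.sin s ^ 2)) * (1 - m * Real.sin s ^ 2) - (1 - m) - m * (1 - m * Real.sin s ^ 2) * (Real.cos s ^ 2 - Real.sin s ^ 2)) * hss + (-m * (1 - m * Real.sin s ^ 2) ^ 2 - m ^ 2 * (1 - m * Real.sin s ^ 2) * Real.sin s ^ 2) * hpy

theorem elliptic_K_derivative (m : ℝ) (hm0 : 0 < m) (hm1 : m < 1) :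
    HasDerivAt K0 ((E0 m / (1 - m) - K0 m) / (2*m)) m := by
  have hm1' : 0 < 1 - m := by linarith
  set c : ℝ := (1 - m) / 2 with hc
  have hcpos : 0 < c := by positivity
  have hpos : ∀ s, 0 < 1 - m * Real.sin s ^ 2 := tpos m hm1
  have hct : Continuous fun s : ℝ => 1 - m * Real.sin s ^ 2 := by fun_prop
  have hcr : Continuous fun s : ℝ => Real.sqrt (1 - m * Real.sin s ^ 2) := hct.sqrt
  have hrpos : ∀ s, 0 < Real.sqrt (1 - m * Real.sin s ^ 2) :=
    fun s => Real.sqrt_pos.2 (hpos s)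
  have hrt_pos : ∀ s, 0 < Real.sqrt (1 - m * Real.sin s ^ 2) * (1 - m * Real.sin s ^ 2) :=
    fun s => mul_pos (hrpos s) (hpos s)
  -- continuity of the various integrands
  have hcK : Continuous fun s : ℝ => 1 / Real.sqrt (1 - m * Real.sin s ^ 2) :=
    continuous_const.div hcr fun s => (hrpos s).ne'
  have hcJ : Continuous fun s : ℝ =>
      1 / (Real.sqrt (1 - m * Real.sin s ^ 2) * (1 - m * Real.sin s ^ 2)) :=
    continuous_const.div (hcr.mul hct) fun s => (hrt_pos s).ne'
  have hcF' : Continuous fun s : ℝ =>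
      Real.sin s ^ 2 / (2 * (Real.sqrt (1 - m * Real.sin s ^ 2) * (1 - m * Real.sin s ^ 2))) :=
    ((Real.continuous_sin.pow 2)).div (continuous_const.mul (hcr.mul hct))
      fun s => (mul_pos two_pos (hrt_pos s)).ne'
  -- Step 1: differentiate under the integral sign
  have key : HasDerivAt K0
      (∫ s in (0:ℝ)..(π/2),
        Real.sin s ^ 2 / (2 * (Real.sqrt (1 - m * Real.sin s ^ 2) * (1 - m * Real.sin s ^ 2)))) m := by
    have hx1 : ∀ x ∈ Metric.ball m c, x < 1 := by
      intro x hx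
      rw [Metric.mem_ball, Real.dist_eq, abs_lt] at hx
      linarith [hx.2]
    have htx : ∀ x ∈ Metric.ball m c, ∀ s : ℝ, c ≤ 1 - x * Real.sin s ^ 2 := by
      intro x hx s
      rw [Metric.mem_ball, Real.dist_eq, abs_lt] at hx
      have h1 : Real.sin s ^ 2 ≤ 1 := Real.sin_sq_le_one s
      have h2 : (0:ℝ) ≤ Real.sin s ^ 2 := sq_nonneg _
      rcases le_or_gt x 0 with h | h
      · nlinarith
      · nlinarith [hx.2]
    have H := intervalIntegral.hasDerivAt_integral_of_dominated_loc_of_deriv_le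
      (F := fun x s => 1 / Real.sqrt (1 - x * Real.sin s ^ 2))
      (F' := fun x s => Real.sin s ^ 2 /
        (2 * (Real.sqrt (1 - x * Real.sin s ^ 2) * (1 - x * Real.sin s ^ 2))))
      (x₀ := m) (a := 0) (b := π/2) (μ := MeasureTheory.volume) (bound := fun _ => 1 / (2 * (Real.sqrt c * c)))
      (Metric.ball_mem_nhds m hcpos) ?_ ?_ ?_ ?_ ?_ ?_
    · exact H.2
    · -- measurability of F x near m
      filter_upwards with x
      exact (measurable_const.div
        ((Real.continuous_sqrt.comp (by fun_prop)).measurable)).aestronglyMeasurable.restrict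
    · exact hcK.intervalIntegrable _ _
    · exact hcF'.aestronglyMeasurable.restrict
    · -- bound
      filter_upwards with s _ x hx
      have hcx := htx x hx s
      have hxpos : 0 < 1 - x * Real.sin s ^ 2 := lt_of_lt_of_le hcpos hcx
      have hmono : Real.sqrt c * c ≤
          Real.sqrt (1 - x * Real.sin s ^ 2) * (1 - x * Real.sin s ^ 2) :=
        mul_le_mul (Real.sqrt_le_sqrt hcx) hcx hcpos.le (Real.sqrt_nonneg _)
      have h1 : Real.sin s ^ 2 ≤ 1 := Real.sin_sq_le_one s
      rw [Real.norm_eq_abs, abs_of_nonneg (by positivity)]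
      apply div_le_div₀ (by positivity) h1 (by positivity)
      have : 0 < Real.sqrt c * c := by positivity
      nlinarith
    · exact intervalIntegrable_const
    · filter_upwards with s _ x hx
      exact dK x (hx1 x hx) s
  -- Step 2: the FTC identity  ∫ 1/(√t·t) = E0 m / (1-m)
  have hJ : (∫ s in (0:ℝ)..(π/2),
      1 / (Real.sqrt (1 - m * Real.sin s ^ 2) * (1 - m * Real.sin s ^ 2)))
      = E0 m / (1 - m) := by
    have hcg' : Continuous fun s : ℝ =>
        (Real.sqrt (1 - m * Real.sin s ^ 2)
          - (1 - m) / (Real.sqrt (1 - m * Real.sin s ^ 2) * (1 - m * Real.sin s ^ 2))) / m := by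
      exact (hcr.sub (continuous_const.div (hcr.mul hct) fun s => (hrt_pos s).ne')).div_const m
    have hftc := intervalIntegral.integral_eq_sub_of_hasDerivAt
      (a := (0:ℝ)) (b := π/2)
      (f := fun s : ℝ => Real.sin s * Real.cos s / Real.sqrt (1 - m * Real.sin s ^ 2))
      (fun s _ => dG m hm0 hm1 s) (hcg'.intervalIntegrable _ _)
    simp only [Real.sin_zero, Real.cos_pi_div_two, mul_zero, zero_mul, zero_div, sub_zero,
      sub_self] at hftc
    have h1 : (fun s : ℝ => (Real.sqrt (1 - m * Real.sin s ^ 2)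
          - (1 - m) / (Real.sqrt (1 - m * Real.sin s ^ 2) * (1 - m * Real.sin s ^ 2))) / m)
        = fun s : ℝ => (1/m) * Real.sqrt (1 - m * Real.sin s ^ 2)
          - ((1 - m)/m) * (1 / (Real.sqrt (1 - m * Real.sin s ^ 2) * (1 - m * Real.sin s ^ 2))) := by
      funext s
      have h := hrt_pos s
      field_simp
    rw [h1, intervalIntegral.integral_sub
        ((continuous_const.fun_mul hcr).intervalIntegrable _ _)
        ((continuous_const.fun_mul hcJ).intervalIntegrable _ _),
      intervalIntegral.integral_const_mul, intervalIntegral.integral_const_mul] at hftc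
    have hE : (∫ s in (0:ℝ)..(π/2), Real.sqrt (1 - m * Real.sin s ^ 2)) = E0 m := rfl
    rw [hE] at hftc
    rw [eq_div_iff hm1'.ne']
    have hmne : m ≠ 0 := hm0.ne'
    field_simp at hftc ⊢
    linarith [hftc]
  -- Step 3: pointwise rewrite of the integrand and conclusion
  have hpt : ∀ s : ℝ,
      Real.sin s ^ 2 / (2 * (Real.sqrt (1 - m * Real.sin s ^ 2) * (1 - m * Real.sin s ^ 2)))
      = (1 / (2*m)) * (1 / (Real.sqrt (1 - m * Real.sin s ^ 2) * (1 - m * Real.sin s ^ 2)))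
        - (1 / (2*m)) * (1 / Real.sqrt (1 - m * Real.sin s ^ 2)) := by
    intro s
    have hr := hrpos s
    have ht := hpos s
    generalize Real.sqrt (1 - m * Real.sin s ^ 2) = r at hr ⊢
    have e : Real.sin s ^ 2 = (1 - (1 - m * Real.sin s ^ 2)) / m := by field_simp; ring
    generalize 1 - m * Real.sin s ^ 2 = t at ht e ⊢
    rw [e]
    field_simp
  have hInt : (∫ s in (0:ℝ)..(π/2),
      Real.sin s ^ 2 / (2 * (Real.sqrt (1 - m * Real.sin s ^ 2) * (1 - m * Real.sin s ^ 2))))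
      = (E0 m / (1 - m) - K0 m) / (2*m) := by
    rw [intervalIntegral.integral_congr (g := fun s =>
      (1 / (2*m)) * (1 / (Real.sqrt (1 - m * Real.sin s ^ 2) * (1 - m * Real.sin s ^ 2)))
        - (1 / (2*m)) * (1 / Real.sqrt (1 - m * Real.sin s ^ 2))) (fun s _ => hpt s),
      intervalIntegral.integral_sub ((continuous_const.fun_mul hcJ).intervalIntegrable _ _)
        ((continuous_const.fun_mul hcK).intervalIntegrable _ _),
      intervalIntegral.integral_const_mul, intervalIntegral.integral_const_mul, hJ]
    rw [K0]
    field_simp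
  rw [← hInt]
  exact key
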